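/- (Rosenberg–Zelinsky) Let A be an Azumaya algebra over a commutative ring S. Then the group Out_S(A) of S-algebra automorphisms of A modulo inner automorphisms is abelian. -/

import Mathlib

open TensorProduct

section RosenbergZelinskyAux

variable {S A : Type*} [CommRing S] [Ring A] [Algebra S A]

/-- A finite dual basis for a finitely generated projective module. -/
private lemma rz_dual_basis (S A : Type*) [CommRing S] [Ring A] [Algebra S A]
    [Module.Finite S A] [Module.Projective S A] :
    ∃ (n : ℕ) (a : Fin n → A) (g : Fin n → (A →ₗ[S] S)),
      ∑ i, (g i).smulRight (a i) = (1 : Module.End S A) := by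
  obtain ⟨n, π, hπ⟩ := Module.Finite.exists_fin' S A
  obtain ⟨s, hs⟩ := Module.projective_lifting_property π LinearMap.id hπ
  refine ⟨n, fun i => π (Pi.single i 1), fun i => (LinearMap.proj i).comp s, ?_⟩
  ext x
  have h1 : ∀ i : Fin n, (s x i) • π (Pi.single i (1:S)) = π (Pi.single i (s x i)) := by
    intro i
    rw [← map_smul, ← Pi.single_smul, smul_eq_mul, mul_one]
  simp only [LinearMap.sum_apply, LinearMap.smulRight_apply, LinearMap.coe_comp,
    Function.comp_apply, LinearMap.proj_apply, Module.End.one_apply]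
  rw [Finset.sum_congr rfl fun i _ => h1 i, ← map_sum, Finset.univ_sum_single]
  exact DFunLike.congr_fun hs x

/-- The Azumaya isomorphism is multiplicative. -/
private lemma rz_e_mul (e : A ⊗[S] Aᵐᵒᵖ ≃ₗ[S] Module.End S A)
    (he : ∀ (a : A) (b : Aᵐᵒᵖ) (c : A), e (a ⊗ₜ[S] b) c = a * c * b.unop) :
    ∀ x y : A ⊗[S] Aᵐᵒᵖ, e (x * y) = e x * e y := by
  intro x y
  induction x using TensorProduct.induction_on with
  | zero => simp [zero_mul]
  | add x₁ x₂ h1 h2 => simp [add_mul, h1, h2]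
  | tmul a b =>
    induction y using TensorProduct.induction_on with
    | zero => simp [mul_zero]
    | add y₁ y₂ h1 h2 => simp [mul_add, h1, h2]
    | tmul a' b' =>
      rw [Algebra.TensorProduct.tmul_mul_tmul]
      ext c
      simp only [he, Module.End.mul_apply, he, MulOpposite.unop_mul, mul_assoc]

private lemma rz_e_one (e : A ⊗[S] Aᵐᵒᵖ ≃ₗ[S] Module.End S A)
    (he : ∀ (a : A) (b : Aᵐᵒᵖ) (c : A), e (a ⊗ₜ[S] b) c = a * c * b.unop) :
    e 1 = 1 := by
  rw [Algebra.TensorProduct.one_def]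
  ext c
  simp [he]

private lemma rz_map_mul (f : A →ₗ[S] A) (g : Aᵐᵒᵖ →ₗ[S] Aᵐᵒᵖ)
    (hf : ∀ a b, f (a * b) = f a * f b) (hg : ∀ a b, g (a * b) = g a * g b) :
    ∀ x y : A ⊗[S] Aᵐᵒᵖ, TensorProduct.map f g (x * y)
      = TensorProduct.map f g x * TensorProduct.map f g y := by
  intro x y
  induction x using TensorProduct.induction_on with
  | zero => simp [zero_mul]
  | add x₁ x₂ h1 h2 => simp [add_mul, h1, h2]
  | tmul a b =>
    induction y using TensorProduct.induction_on with
    | zero => simp [mul_zero]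
    | add y₁ y₂ h1 h2 => simp [mul_add, h1, h2]
    | tmul a' b' =>
      rw [Algebra.TensorProduct.tmul_mul_tmul, TensorProduct.map_tmul, TensorProduct.map_tmul,
        TensorProduct.map_tmul, Algebra.TensorProduct.tmul_mul_tmul, hf, hg]

private lemma rz_hkey (e : A ⊗[S] Aᵐᵒᵖ ≃ₗ[S] Module.End S A)
    (he : ∀ (a : A) (b : Aᵐᵒᵖ) (c : A), e (a ⊗ₜ[S] b) c = a * c * b.unop)
    (σ : A ⊗[S] Aᵐᵒᵖ →ₗ[S] A ⊗[S] Aᵐᵒᵖ) (hσ : ∀ x y, σ (x * y) = σ x * σ y)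
    (ψ : A →ₗ[S] S) (t : A ⊗[S] Aᵐᵒᵖ) (x : A) :
    e (σ (e.symm (ψ.smulRight (e t x)))) 1
      = e (σ t) (e (σ (e.symm (ψ.smulRight x))) 1) := by
  have hθ : ψ.smulRight (e t x) = (e t) * (ψ.smulRight x) := by
    ext y
    simp [Module.End.mul_apply, map_smul]
  have hsymm : e.symm ((e t) * (ψ.smulRight x)) = t * e.symm (ψ.smulRight x) := by
    apply e.injective
    rw [e.apply_symm_apply, rz_e_mul e he, e.apply_symm_apply]
  rw [hθ, hsymm, hσ, rz_e_mul e he, Module.End.mul_apply]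

/-- Left twisted family: elements `c i` with `c i * x = φ x * c i` and `∑ c i * a i = 1`. -/
private lemma rz_left_family [Module.Finite S A] [Module.Projective S A]
    (e : A ⊗[S] Aᵐᵒᵖ ≃ₗ[S] Module.End S A)
    (he : ∀ (a : A) (b : Aᵐᵒᵖ) (c : A), e (a ⊗ₜ[S] b) c = a * c * b.unop)
    (φ : A ≃ₐ[S] A) :
    ∃ (n : ℕ) (a c : Fin n → A), (∀ i x, c i * x = φ x * c i) ∧ ∑ i, c i * a i = 1 := by
  obtain ⟨n, a, g, hg⟩ := rz_dual_basis S A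
  set σ : A ⊗[S] Aᵐᵒᵖ →ₗ[S] A ⊗[S] Aᵐᵒᵖ :=
    TensorProduct.map φ.toLinearMap LinearMap.id with hσdef
  have hσ : ∀ x y, σ (x * y) = σ x * σ y :=
    rz_map_mul _ _ (fun a b => map_mul φ a b) (fun a b => rfl)
  set h : (A →ₗ[S] S) → A → A := fun ψ x => e (σ (e.symm (ψ.smulRight x))) 1 with hhdef
  have h1 : ∀ ψ x, h ψ x = h ψ 1 * x := by
    intro ψ x
    have ht : e ((1:A) ⊗ₜ[S] (MulOpposite.op x)) 1 = x := by simp [he]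
    have key := rz_hkey e he σ hσ ψ ((1:A) ⊗ₜ[S] (MulOpposite.op x)) 1
    rw [ht] at key
    rw [hhdef]
    dsimp only
    rw [key, hσdef]
    rw [TensorProduct.map_tmul]
    simp [he]
  have h2 : ∀ ψ x, h ψ x = φ x * h ψ 1 := by
    intro ψ x
    have ht : e (x ⊗ₜ[S] (1 : Aᵐᵒᵖ)) 1 = x := by simp [he]
    have key := rz_hkey e he σ hσ ψ (x ⊗ₜ[S] (1 : Aᵐᵒᵖ)) 1
    rw [ht] at key
    rw [hhdef]
    dsimp only
    rw [key, hσdef, TensorProduct.map_tmul]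
    simp [he]
  refine ⟨n, a, fun i => h (g i) 1, ?_, ?_⟩
  · intro i x
    rw [← h1 (g i) x, h2 (g i) x]
  · have key : ∑ i, h (g i) (a i) = 1 := by
      rw [hhdef]
      dsimp only
      rw [← LinearMap.sum_apply, ← map_sum, ← map_sum, ← map_sum, hg]
      have h1' : e.symm (1 : Module.End S A) = 1 := by
        apply e.injective; rw [e.apply_symm_apply, rz_e_one e he]
      have hσ1 : σ 1 = 1 := by
        rw [Algebra.TensorProduct.one_def, hσdef, TensorProduct.map_tmul]
        simp [Algebra.TensorProduct.one_def]
      rw [h1', hσ1, rz_e_one e he, Module.End.one_apply]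
    calc ∑ i, (fun i => h (g i) 1) i * a i = ∑ i, h (g i) (a i) :=
          Finset.sum_congr rfl fun i _ => (h1 (g i) (a i)).symm
      _ = 1 := key

/-- Right twisted family: elements `d i` with `d i * x = φ.symm x * d i` and `∑ a i * d i = 1`. -/
private lemma rz_right_family [Module.Finite S A] [Module.Projective S A]
    (e : A ⊗[S] Aᵐᵒᵖ ≃ₗ[S] Module.End S A)
    (he : ∀ (a : A) (b : Aᵐᵒᵖ) (c : A), e (a ⊗ₜ[S] b) c = a * c * b.unop)
    (φ : A ≃ₐ[S] A) :
    ∃ (n : ℕ) (a d : Fin n → A), (∀ i x, d i * x = φ.symm x * d i) ∧ ∑ i, a i * d i = 1 := by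
  obtain ⟨n, a, g, hg⟩ := rz_dual_basis S A
  set gop : Aᵐᵒᵖ →ₗ[S] Aᵐᵒᵖ := (MulOpposite.opLinearEquiv S).toLinearMap ∘ₗ
    (φ.toLinearMap ∘ₗ (MulOpposite.opLinearEquiv S).symm.toLinearMap) with hgopdef
  have hgop_apply : ∀ b : Aᵐᵒᵖ, gop b = MulOpposite.op (φ b.unop) := fun b => rfl
  have hgopmul : ∀ b b' : Aᵐᵒᵖ, gop (b * b') = gop b * gop b' := by
    intro b b'
    simp only [hgop_apply, MulOpposite.unop_mul, map_mul, MulOpposite.op_mul]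
  set τ : A ⊗[S] Aᵐᵒᵖ →ₗ[S] A ⊗[S] Aᵐᵒᵖ :=
    TensorProduct.map LinearMap.id gop with hτdef
  have hτ : ∀ x y, τ (x * y) = τ x * τ y := rz_map_mul _ _ (fun a b => rfl) hgopmul
  set h : (A →ₗ[S] S) → A → A := fun ψ x => e (τ (e.symm (ψ.smulRight x))) 1 with hhdef
  have h1 : ∀ ψ x, h ψ x = x * h ψ 1 := by
    intro ψ x
    have ht : e (x ⊗ₜ[S] (1 : Aᵐᵒᵖ)) 1 = x := by simp [he]
    have key := rz_hkey e he τ hτ ψ (x ⊗ₜ[S] (1 : Aᵐᵒᵖ)) 1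
    rw [ht] at key
    rw [hhdef]
    dsimp only
    rw [key, hτdef, TensorProduct.map_tmul]
    simp [he, hgop_apply]
  have h2 : ∀ ψ x, h ψ x = h ψ 1 * φ x := by
    intro ψ x
    have ht : e ((1 : A) ⊗ₜ[S] MulOpposite.op x) 1 = x := by simp [he]
    have key := rz_hkey e he τ hτ ψ ((1 : A) ⊗ₜ[S] MulOpposite.op x) 1
    rw [ht] at key
    rw [hhdef]
    dsimp only
    rw [key, hτdef, TensorProduct.map_tmul]
    simp [he, hgop_apply]
  refine ⟨n, a, fun i => h (g i) 1, ?_, ?_⟩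
  · intro i x
    have hh := (h1 (g i) (φ.symm x)).symm.trans (h2 (g i) (φ.symm x))
    rw [AlgEquiv.apply_symm_apply] at hh
    exact hh.symm
  · have key : ∑ i, h (g i) (a i) = 1 := by
      rw [hhdef]
      dsimp only
      rw [← LinearMap.sum_apply, ← map_sum, ← map_sum, ← map_sum, hg]
      have h1' : e.symm (1 : Module.End S A) = 1 := by
        apply e.injective; rw [e.apply_symm_apply, rz_e_one e he]
      have hτ1 : τ 1 = 1 := by
        rw [Algebra.TensorProduct.one_def, hτdef, TensorProduct.map_tmul]
        simp [hgop_apply, Algebra.TensorProduct.one_def]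
      rw [h1', hτ1, rz_e_one e he, Module.End.one_apply]
    calc ∑ i, a i * (fun i => h (g i) 1) i = ∑ i, h (g i) (a i) :=
          Finset.sum_congr rfl fun i _ => (h1 (g i) (a i)).symm
      _ = 1 := key

/-- The key pairing: for every `S`-algebra automorphism `α` of the Azumaya algebra `A` there
are finite families `c i ∈ M_α`, `d i ∈ M_{α⁻¹}` with `∑ c i * d i = 1`. -/
private lemma rz_pairing [Module.Finite S A] [Module.Projective S A]
    (e : A ⊗[S] Aᵐᵒᵖ ≃ₗ[S] Module.End S A)
    (he : ∀ (a : A) (b : Aᵐᵒᵖ) (c : A), e (a ⊗ₜ[S] b) c = a * c * b.unop)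
    (α : A ≃ₐ[S] A) :
    ∃ (n : ℕ) (c d : Fin n → A), (∀ i x, c i * x = α x * c i) ∧
      (∀ i x, d i * x = α.symm x * d i) ∧ ∑ i, c i * d i = 1 := by
  obtain ⟨n₁, a₁, C, hC, hCsum⟩ := rz_left_family e he α.symm
  obtain ⟨n₂, a₂, D, hD, hDsum⟩ := rz_right_family e he α.symm
  have hφs : ∀ x : A, α.symm.symm x = α x := fun x => by rw [AlgEquiv.symm_symm]
  have hcen : ∀ j i, D j * C i ∈ Subalgebra.center S A := by
    intro j i
    rw [Subalgebra.mem_center_iff]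
    intro b
    have : D j * C i * b = b * (D j * C i) := by
      rw [mul_assoc, hC i b, ← mul_assoc, hD j (α.symm b), AlgEquiv.symm_apply_apply, mul_assoc]
    exact this.symm
  have hcen' : ∀ j i (b : A), b * (D j * C i) = (D j * C i) * b :=
    fun j i b => Subalgebra.mem_center_iff.mp (hcen j i) b
  set Z := Subalgebra.center S A with hZ
  set T : Set Z := {z | ∃ p q : A, (∀ x, p * x = α.symm.symm x * p) ∧
    (∀ x, q * x = α.symm x * q) ∧ (z : A) = p * q} with hT
  set I : Ideal Z := Ideal.span T with hIdef
  have hone : (1 : A) = ∑ j, ∑ i, (D j * C i) * (a₂ j * a₁ i) := by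
    have h0 : (1 : A) = (∑ j, a₂ j * D j) * (∑ i, C i * a₁ i) := by
      rw [hDsum, hCsum, one_mul]
    rw [h0, Finset.sum_mul]
    refine Finset.sum_congr rfl fun j _ => ?_
    rw [Finset.mul_sum]
    refine Finset.sum_congr rfl fun i _ => ?_
    calc a₂ j * D j * (C i * a₁ i) = a₂ j * ((D j * C i) * a₁ i) := by simp only [mul_assoc]
      _ = (a₂ j * (D j * C i)) * a₁ i := by rw [← mul_assoc]
      _ = ((D j * C i) * a₂ j) * a₁ i := by rw [hcen' j i (a₂ j)]
      _ = (D j * C i) * (a₂ j * a₁ i) := by rw [mul_assoc]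
  have hsmul : ∀ (z : Z) (y : A), z • y = (z : A) * y := fun z y => rfl
  have hIA : ∀ x : A, x ∈ I • (⊤ : Submodule Z A) := by
    intro x
    have hx : x = ∑ j, ∑ i, (⟨D j * C i, hcen j i⟩ : Z) • (x * (a₂ j * a₁ i)) := by
      calc x = x * 1 := (mul_one x).symm
        _ = ∑ j, ∑ i, x * ((D j * C i) * (a₂ j * a₁ i)) := by
            rw [hone, Finset.mul_sum]
            exact Finset.sum_congr rfl fun j _ => Finset.mul_sum _ _ _
        _ = ∑ j, ∑ i, (⟨D j * C i, hcen j i⟩ : Z) • (x * (a₂ j * a₁ i)) := by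
            refine Finset.sum_congr rfl fun j _ => Finset.sum_congr rfl fun i _ => ?_
            rw [hsmul, ← mul_assoc, hcen' j i x, mul_assoc]
    rw [hx]
    exact Submodule.sum_mem _ fun j _ => Submodule.sum_mem _ fun i _ =>
      Submodule.smul_mem_smul (Ideal.subset_span ⟨D j, C i, hD j, hC i, rfl⟩) Submodule.mem_top
  haveI : Module.Finite Z A := Module.Finite.of_restrictScalars_finite S Z A
  obtain ⟨r, hr1, hr0⟩ := Submodule.exists_sub_one_mem_and_smul_eq_zero_of_fg_of_le_smul I
    (⊤ : Submodule Z A) (Module.Finite.fg_top) (fun x _ => hIA x)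
  have hr : r = 0 := by
    have h0 := hr0 1 Submodule.mem_top
    rw [hsmul, mul_one] at h0
    exact Subtype.ext h0
  replace hr1 : (-1 : Z) ∈ I := by
    rw [hr] at hr1
    convert hr1 using 1
    exact (zero_sub _).symm
  have h1I : (1 : Z) ∈ Submodule.span Z T := by
    have := I.neg_mem hr1
    simpa using this
  obtain ⟨n, f, g, hsum⟩ := Submodule.mem_span_set'.mp h1I
  choose p q hp hq hpq using fun i => (g i).2
  refine ⟨n, fun i => (↑(f i) : A) * p i, fun i => q i, ?_, ?_, ?_⟩
  · intro i x
    have hz : ∀ b : A, b * ↑(f i) = ↑(f i) * b :=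
      fun b => Subalgebra.mem_center_iff.mp (f i).2 b
    calc (↑(f i) : A) * p i * x = ↑(f i) * (α.symm.symm x * p i) := by
          rw [mul_assoc, hp i x]
      _ = (↑(f i) * α.symm.symm x) * p i := by rw [← mul_assoc]
      _ = (α.symm.symm x * ↑(f i)) * p i := by rw [hz (α.symm.symm x)]
      _ = α x * ((↑(f i) : A) * p i) := by rw [hφs, mul_assoc]
  · intro i x
    exact hq i x
  · calc ∑ i, ((f i : A) * p i) * q i = ∑ i, Z.val (f i • (g i : Z)) := by
          refine Finset.sum_congr rfl fun i _ => ?_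
          have hv : Z.val (f i • (g i : Z)) = (f i : A) * ((g i : Z) : A) := by
            rw [smul_eq_mul, map_mul]; rfl
          rw [hv, hpq i, mul_assoc]
      _ = Z.val (∑ i, f i • (g i : Z)) := (map_sum Z.val _ _).symm
      _ = 1 := by rw [hsum]; rfl

private lemma rz_term {A : Type*} [Ring A] (ci ej di fj el ck fl dk : A)
    (hD : ∀ x, (di * ck) * x = x * (di * ck))
    (hF : ∀ x, (fj * el) * x = x * (fj * el)) :
    (ci * ej * di * fj) * (el * ck * fl * dk)
      = (ci * ej) * ((fj * el) * ((fl * di) * (ck * dk))) := by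
  calc (ci * ej * di * fj) * (el * ck * fl * dk)
      = (ci * ej) * ((di * (fj * el)) * (ck * (fl * dk))) := by simp only [mul_assoc]
    _ = (ci * ej) * (((fj * el) * di) * (ck * (fl * dk))) := by rw [← hF]
    _ = (ci * ej) * ((fj * el) * ((di * ck) * (fl * dk))) := by simp only [mul_assoc]
    _ = (ci * ej) * ((fj * el) * ((fl * dk) * (di * ck))) := by rw [hD]
    _ = (ci * ej) * ((fj * el) * (fl * (dk * (di * ck)))) := by simp only [mul_assoc]
    _ = (ci * ej) * ((fj * el) * (fl * ((di * ck) * dk))) := by rw [← hD]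
    _ = (ci * ej) * ((fj * el) * ((fl * di) * (ck * dk))) := by simp only [mul_assoc]

private lemma rz_key_mul {A : Type*} [Ring A] {n m : ℕ} (c d : Fin n → A) (e f : Fin m → A)
    (hdc : ∀ i k x, (d i * c k) * x = x * (d i * c k))
    (hfe : ∀ j l x, (f j * e l) * x = x * (f j * e l))
    (hcd : ∑ i, c i * d i = 1) (hef : ∑ j, e j * f j = 1) :
    (∑ i, ∑ j, c i * e j * d i * f j) * (∑ l, ∑ k, e l * c k * f l * d k) = 1 := by
  have inner : ∀ i j l, (c i * e j * d i * f j) * (∑ k, e l * c k * f l * d k)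
      = (c i * e j) * ((f j * e l) * (f l * d i)) := by
    intro i j l
    rw [Finset.mul_sum]
    calc (∑ k, (c i * e j * d i * f j) * (e l * c k * f l * d k))
        = ∑ k, (c i * e j) * ((f j * e l) * ((f l * d i) * (c k * d k))) :=
          Finset.sum_congr rfl fun k _ => rz_term _ _ _ _ _ _ _ _ (hdc i k) (hfe j l)
      _ = (c i * e j) * ((f j * e l) * ((f l * d i) * (∑ k, c k * d k))) := by
          simp only [← Finset.mul_sum]
      _ = (c i * e j) * ((f j * e l) * (f l * d i)) := by rw [hcd, mul_one]
  have step : ∀ i j, (c i * e j * d i * f j) * (∑ l, ∑ k, e l * c k * f l * d k)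
      = (c i) * ((e j * f j) * d i) := by
    intro i j
    rw [Finset.mul_sum]
    calc (∑ l, (c i * e j * d i * f j) * (∑ k, e l * c k * f l * d k))
        = ∑ l, (c i * e j) * ((f j * e l) * (f l * d i)) :=
          Finset.sum_congr rfl fun l _ => inner i j l
      _ = ∑ l, (c i) * ((e j * f j) * ((e l * f l) * d i)) := by simp only [mul_assoc]
      _ = (c i) * ((e j * f j) * ((∑ l, e l * f l) * d i)) := by
          rw [Finset.sum_mul, Finset.mul_sum, Finset.mul_sum]
      _ = (c i) * ((e j * f j) * d i) := by rw [hef, one_mul]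
  rw [Finset.sum_mul]
  have hrow : ∀ i, (∑ j, c i * e j * d i * f j) * (∑ l, ∑ k, e l * c k * f l * d k)
      = c i * d i := by
    intro i
    rw [Finset.sum_mul]
    calc (∑ j, (c i * e j * d i * f j) * (∑ l, ∑ k, e l * c k * f l * d k))
        = ∑ j, c i * ((e j * f j) * d i) := Finset.sum_congr rfl fun j _ => step i j
      _ = c i * ((∑ j, e j * f j) * d i) := by rw [Finset.sum_mul, Finset.mul_sum]
      _ = c i * d i := by rw [hef, one_mul]
  rw [Finset.sum_congr rfl fun i _ => hrow i, hcd]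

end RosenbergZelinskyAux

/-- (Rosenberg–Zelinsky)  Let `A` be an Azumaya algebra over a commutative ring `S`,
i.e. `A` is a faithful, finitely generated projective `S`-module and the canonical map
`A ⊗[S] Aᵐᵒᵖ → End_S(A)`, `a ⊗ b ↦ (c ↦ a c b)`, is an isomorphism.  Then the group
`Out_S(A)` of `S`-algebra automorphisms of `A` modulo inner automorphisms is abelian:
every commutator of `S`-algebra automorphisms is inner. -/
theorem rosenberg_zelinsky_out_abelian (S A : Type*) [CommRing S] [Ring A] [Algebra S A]
    [FaithfulSMul S A] [Module.Finite S A] [Module.Projective S A]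
    (hAz : ∃ e : A ⊗[S] Aᵐᵒᵖ ≃ₗ[S] Module.End S A,
      ∀ (a : A) (b : Aᵐᵒᵖ) (c : A), e (a ⊗ₜ[S] b) c = a * c * b.unop) :
    ∃ κ : Aˣ →* (A ≃ₐ[S] A),
      (∀ (u : Aˣ) (x : A), κ u x = ↑u * x * ↑u⁻¹) ∧
      ∀ α β : A ≃ₐ[S] A, α * β * α⁻¹ * β⁻¹ ∈ κ.range := by
  obtain ⟨e, he⟩ := hAz
  refine ⟨{
    toFun := fun u => {
      toFun := fun x => ↑u * x * ↑u⁻¹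
      invFun := fun x => ↑u⁻¹ * x * ↑u
      left_inv := fun x => by simp [mul_assoc]
      right_inv := fun x => by simp [mul_assoc]
      map_mul' := fun x y => by simp [mul_assoc]
      map_add' := fun x y => by simp [mul_add, add_mul]
      commutes' := fun r => by
        show ↑u * (algebraMap S A r) * ↑u⁻¹ = algebraMap S A r
        rw [← Algebra.commutes, Units.mul_inv_cancel_right] }
    map_one' := AlgEquiv.ext fun x => by simp
    map_mul' := fun u v => AlgEquiv.ext fun x => by
      show ↑(u * v) * x * ↑(u * v)⁻¹ = ↑u * (↑v * x * ↑v⁻¹) * ↑u⁻¹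
      simp [mul_assoc] }, fun u x => rfl, ?_⟩
  intro α β
  obtain ⟨n, c, d, hc, hd, hcd⟩ := rz_pairing e he α
  obtain ⟨m, ee, f, hee, hf, hef⟩ := rz_pairing e he β
  have hdc : ∀ i k x, (d i * c k) * x = x * (d i * c k) := by
    intro i k x
    calc d i * c k * x = d i * (α x * c k) := by rw [mul_assoc, hc k x]
      _ = (d i * α x) * c k := by rw [← mul_assoc]
      _ = (α.symm (α x) * d i) * c k := by rw [hd i (α x)]
      _ = x * (d i * c k) := by rw [AlgEquiv.symm_apply_apply, mul_assoc]
  have hfe : ∀ j l x, (f j * ee l) * x = x * (f j * ee l) := by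
    intro j l x
    calc f j * ee l * x = f j * (β x * ee l) := by rw [mul_assoc, hee l x]
      _ = (f j * β x) * ee l := by rw [← mul_assoc]
      _ = (β.symm (β x) * f j) * ee l := by rw [hf j (β x)]
      _ = x * (f j * ee l) := by rw [AlgEquiv.symm_apply_apply, mul_assoc]
  set u := ∑ i, ∑ j, c i * ee j * d i * f j with hu_def
  set v := ∑ j, ∑ i, ee j * c i * f j * d i with hv_def
  have huv : u * v = 1 := rz_key_mul c d ee f hdc hfe hcd hef
  have hvu : v * u = 1 := rz_key_mul ee f c d hfe hdc hef hcd
  have hp' : ∀ (p : A) (g : A → A), (∀ t, p * t = g t * p) →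
      ∀ t z, p * (t * z) = g t * (p * z) :=
    fun p g hp t z => by rw [← mul_assoc, hp t, mul_assoc]
  have hterm : ∀ i j x, (c i * ee j * d i * f j) * x
      = α (β (α.symm (β.symm x))) * (c i * ee j * d i * f j) := by
    intro i j x
    calc (c i * ee j * d i * f j) * x = c i * (ee j * (d i * (f j * x))) := by
          simp only [mul_assoc]
      _ = c i * (ee j * (d i * (β.symm x * f j))) := by rw [hf j x]
      _ = c i * (ee j * (α.symm (β.symm x) * (d i * f j))) := by
          rw [hp' (d i) (fun t => α.symm t) (hd i) (β.symm x) (f j)]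
      _ = c i * (β (α.symm (β.symm x)) * (ee j * (d i * f j))) := by
          rw [hp' (ee j) (fun t => β t) (hee j) (α.symm (β.symm x)) (d i * f j)]
      _ = α (β (α.symm (β.symm x))) * (c i * (ee j * (d i * f j))) := by
          rw [hp' (c i) (fun t => α t) (hc i) (β (α.symm (β.symm x))) (ee j * (d i * f j))]
      _ = α (β (α.symm (β.symm x))) * (c i * ee j * d i * f j) := by simp only [mul_assoc]
  have hu : ∀ x, u * x = α (β (α.symm (β.symm x))) * u := by
    intro x
    rw [hu_def, Finset.sum_mul]
    calc (∑ i, (∑ j, c i * ee j * d i * f j) * x)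
        = ∑ i, ∑ j, (c i * ee j * d i * f j) * x :=
          Finset.sum_congr rfl fun i _ => Finset.sum_mul _ _ _
      _ = ∑ i, ∑ j, α (β (α.symm (β.symm x))) * (c i * ee j * d i * f j) :=
          Finset.sum_congr rfl fun i _ => Finset.sum_congr rfl fun j _ => hterm i j x
      _ = α (β (α.symm (β.symm x))) * ∑ i, ∑ j, c i * ee j * d i * f j := by
          simp only [← Finset.mul_sum]
  rw [MonoidHom.mem_range]
  refine ⟨⟨u, v, huv, hvu⟩, ?_⟩
  apply AlgEquiv.ext
  intro x
  show u * x * v = (α * β * α⁻¹ * β⁻¹) x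
  have hx : (α * β * α⁻¹ * β⁻¹) x = α (β (α.symm (β.symm x))) := rfl
  rw [hx, hu x, mul_assoc, huv, mul_one]
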